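/- Let n ≥ 2 and let b_1,…,b_n ≥ 2 and c_1,…,c_n ≥ 1 be integers. Then B_n ∩ C_{n−1} ≠ ∅ if and only if 1/(q_n q_{n−1}) < 1/(t_{n−1}(t_{n−1} + t_{n−2})). -/
import Mathlib


noncomputable section

namespace ShulgaPaper

open Filter Topology

/-- The value of the finite continued fraction `[0; a₁, …, aₙ]`
(the empty continued fraction has value `0`). -/
def cf : List ℕ → ℝ
  | [] => 0
  | a :: l => 1 / ((a : ℝ) + cf l)

/-- Iterates of the Gauss map, starting from the fractional part of `x`. -/
def gaussIter (x : ℝ) : ℕ → ℝ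
  | 0 => Int.fract x
  | n + 1 => Int.fract (1 / gaussIter x n)

/-- The `n`-th partial quotient `aₙ(x)` of the continued fraction expansion of `x`
(for `n ≥ 1`; a junk value is returned if it is undefined). -/
def pq (x : ℝ) (n : ℕ) : ℕ := ⌊1 / gaussIter x (n - 1)⌋₊

/-- The `n`-th partial quotient `aₙ(x)` of `x` is defined (`n ≥ 1`), i.e. `n` does not
exceed the length of the continued fraction expansion of `x`. -/
def pqDefined (x : ℝ) (n : ℕ) : Prop := gaussIter x (n - 1) ≠ 0

/-- The set `G` of real numbers that are rational or whose partial quotients diverge. -/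
def G : Set ℝ :=
  {x | (∃ q : ℚ, x = (q : ℝ)) ∨ Tendsto (fun n => pq x n) atTop atTop}

/-- The list of pairs `(b_k, c_k)`, `k = 1, …, n`, produced by (a totalized version of)
Shulga's algorithm applied to `α`. -/
def shulgaList (α : ℝ) : ℕ → List (ℕ × ℕ)
  | 0 => []
  | n + 1 =>
      let L := shulgaList α n
      let b := pq (α - cf (L.map Prod.snd)) (n + 1) + 1
      let c := pq (α - cf (L.map Prod.fst ++ [b])) (n + 1)
      L ++ [(b, c)]

/-- The list `[b₁, …, bₙ]` of Shulga's algorithm applied to `α`. -/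
def bList (α : ℝ) (n : ℕ) : List ℕ := (shulgaList α n).map Prod.fst

/-- The list `[c₁, …, cₙ]` of Shulga's algorithm applied to `α`. -/
def cList (α : ℝ) (n : ℕ) : List ℕ := (shulgaList α n).map Prod.snd

/-- `bₙ` of Shulga's algorithm applied to `α` (for `n ≥ 1`). -/
def shulgaB (α : ℝ) (n : ℕ) : ℕ := ((shulgaList α n).getLast?.getD (0, 0)).1

/-- `cₙ` of Shulga's algorithm applied to `α` (for `n ≥ 1`). -/
def shulgaC (α : ℝ) (n : ℕ) : ℕ := ((shulgaList α n).getLast?.getD (0, 0)).2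

/-- The first `n` steps of Shulga's algorithm applied to `α` are defined: for each step
`k + 1 ≤ n`, the partial quotients `a_{k+1}(α - [0;c₁,…,c_k])` and
`a_{k+1}(α - [0;b₁,…,b_{k+1}])` defining `b_{k+1}` and `c_{k+1}` exist
(in particular the algorithm has not stopped before step `n`). -/
def shulgaDefined (α : ℝ) (n : ℕ) : Prop :=
  ∀ k < n, pqDefined (α - cf (cList α k)) (k + 1) ∧
    pqDefined (α - cf (bList α (k + 1))) (k + 1)

/-- The half-open interval whose included endpoint is `x` and excluded endpoint is `y`,
the smaller one being the left endpoint. -/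
def hIco (x y : ℝ) : Set ℝ := if x ≤ y then Set.Ico x y else Set.Ioc y x

/-- The list `[a 1, …, a n]`. -/
def listOf (a : ℕ → ℕ) (n : ℕ) : List ℕ := (List.range n).map fun i => a (i + 1)

/-- The interval `B_k` determined by the digits `b`, `c` (`k ≥ 1`). -/
def Bset (b c : ℕ → ℕ) (k : ℕ) : Set ℝ :=
  hIco (cf (listOf b (k - 1) ++ [b k - 1]) + cf (listOf c (k - 1)))
    (cf (listOf b k) + cf (listOf c (k - 1)))

/-- The interval `C_k` determined by the digits `b`, `c` (`k ≥ 1`). -/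
def Cset (b c : ℕ → ℕ) (k : ℕ) : Set ℝ :=
  hIco (cf (listOf c k) + cf (listOf b k))
    (cf (listOf c (k - 1) ++ [c k + 1]) + cf (listOf b k))

/-- `A₀ = [0,1]` and `Aₙ = ⋂_{k=1}^{n} (B_k ∩ C_k)` for `n ≥ 1`. -/
def Aset (b c : ℕ → ℕ) : ℕ → Set ℝ
  | 0 => Set.Icc 0 1
  | n + 1 => ⋂ k ∈ Finset.Icc 1 (n + 1), (Bset b c k ∩ Cset b c k)

/-- The denominators of the convergents of `[0; a 1, a 2, …]`:
`q₀ = 1`, `q₁ = a 1`, `q_k = a k * q_{k-1} + q_{k-2}`. -/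
def qden (a : ℕ → ℕ) : ℕ → ℕ
  | 0 => 1
  | 1 => a 1
  | n + 2 => a (n + 2) * qden a (n + 1) + qden a n


def mat2 (a : ℕ) : Matrix (Fin 2) (Fin 2) ℝ := !![(a:ℝ),1;1,0]
def Mm (l : List ℕ) : Matrix (Fin 2) (Fin 2) ℝ := (l.map mat2).prod

lemma Mm_nil : Mm [] = 1 := by simp [Mm]
lemma Mm_cons (a : ℕ) (l : List ℕ) : Mm (a :: l) = mat2 a * Mm l := by simp [Mm]
lemma Mm_append (l l' : List ℕ) : Mm (l ++ l') = Mm l * Mm l' := by simp [Mm]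

lemma mul_entry (A B : Matrix (Fin 2) (Fin 2) ℝ) (i j : Fin 2) :
    (A * B) i j = A i 0 * B 0 j + A i 1 * B 1 j := by
  rw [Matrix.mul_apply, Fin.sum_univ_two]

lemma Mm_cons_entries (a : ℕ) (l : List ℕ) :
    Mm (a :: l) 0 0 = a * Mm l 0 0 + Mm l 1 0 ∧
    Mm (a :: l) 0 1 = a * Mm l 0 1 + Mm l 1 1 ∧
    Mm (a :: l) 1 0 = Mm l 0 0 ∧ Mm (a :: l) 1 1 = Mm l 0 1 := by
  refine ⟨?_, ?_, ?_, ?_⟩ <;> rw [Mm_cons, mul_entry] <;> simp [mat2]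

lemma Mm_append_entries (l : List ℕ) (x : ℕ) :
    Mm (l ++ [x]) 0 0 = Mm l 0 0 * x + Mm l 0 1 ∧
    Mm (l ++ [x]) 0 1 = Mm l 0 0 ∧
    Mm (l ++ [x]) 1 0 = Mm l 1 0 * x + Mm l 1 1 ∧
    Mm (l ++ [x]) 1 1 = Mm l 1 0 := by
  refine ⟨?_, ?_, ?_, ?_⟩ <;> rw [Mm_append, mul_entry] <;>
    simp [Mm, mat2]

lemma Mm_nonneg (l : List ℕ) :
    0 ≤ Mm l 0 0 ∧ 0 ≤ Mm l 0 1 ∧ 0 ≤ Mm l 1 0 ∧ 0 ≤ Mm l 1 1 := by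
  induction l with
  | nil => simp [Mm_nil, Matrix.one_apply]
  | cons a l ih =>
    obtain ⟨h1, h2, h3, h4⟩ := ih
    obtain ⟨e1, e2, e3, e4⟩ := Mm_cons_entries a l
    refine ⟨?_, ?_, ?_, ?_⟩ <;> simp only [e1, e2, e3, e4] <;> positivity

lemma Mm_one_le (l : List ℕ) (h : ∀ x ∈ l, 1 ≤ x) : 1 ≤ Mm l 0 0 := by
  induction l with
  | nil => simp [Mm_nil, Matrix.one_apply]
  | cons a l ih =>
    obtain ⟨h1, h2, h3, h4⟩ := Mm_nonneg l
    obtain ⟨e1, _, _, _⟩ := Mm_cons_entries a l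
    have ha : (1:ℝ) ≤ a := by exact_mod_cast h a (by simp)
    have := ih (fun x hx => h x (by simp [hx]))
    rw [e1]; nlinarith

lemma cf_eq (l : List ℕ) (h : ∀ x ∈ l, 1 ≤ x) : cf l = Mm l 1 0 / Mm l 0 0 := by
  induction l with
  | nil => simp [cf, Mm_nil, Matrix.one_apply]
  | cons a l ih =>
    obtain ⟨e1, _, e3, _⟩ := Mm_cons_entries a l
    have h00 : (1:ℝ) ≤ Mm l 0 0 := Mm_one_le l (fun x hx => h x (by simp [hx]))
    have h10 : (0:ℝ) ≤ Mm l 1 0 := (Mm_nonneg l).2.2.1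
    have ha : (1:ℝ) ≤ a := by exact_mod_cast h a (by simp)
    rw [cf, ih (fun x hx => h x (by simp [hx])), e1, e3]
    have key : (a:ℝ) + Mm l 1 0 / Mm l 0 0 = (a * Mm l 0 0 + Mm l 1 0) / Mm l 0 0 := by
      field_simp
    rw [key, one_div_div]

lemma Mm_det (l : List ℕ) :
    Mm l 0 0 * Mm l 1 1 - Mm l 0 1 * Mm l 1 0 = (-1) ^ l.length := by
  induction l with
  | nil => simp [Mm_nil, Matrix.one_apply]
  | cons a l ih =>
    obtain ⟨e1, e2, e3, e4⟩ := Mm_cons_entries a l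
    rw [e1, e2, e3, e4, List.length_cons, pow_succ]
    linear_combination (-1 : ℝ) * ih

lemma listOf_succ (a : ℕ → ℕ) (n : ℕ) : listOf a (n + 1) = listOf a n ++ [a (n + 1)] := by
  simp [listOf, List.range_succ]

lemma qden_rec (a : ℕ → ℕ) (n : ℕ) (h : 1 ≤ n) :
    qden a (n + 1) = a (n + 1) * qden a n + qden a (n - 1) := by
  obtain ⟨k, rfl⟩ : ∃ k, n = k + 1 := ⟨n - 1, by omega⟩
  rfl

lemma Mm_q (a : ℕ → ℕ) (n : ℕ) :
    Mm (listOf a n) 0 0 = (qden a n : ℝ) ∧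
    Mm (listOf a n) 0 1 = if n = 0 then 0 else (qden a (n - 1) : ℝ) := by
  induction n with
  | zero => simp [listOf, Mm_nil, Matrix.one_apply, qden]
  | succ n ih =>
    obtain ⟨ih1, ih2⟩ := ih
    obtain ⟨e1, e2, _, _⟩ := Mm_append_entries (listOf a n) (a (n + 1))
    rw [listOf_succ] at *
    constructor
    · rw [e1, ih1, ih2]
      rcases Nat.eq_zero_or_pos n with rfl | hn
      · simp [qden]
      · rw [if_neg (by omega), qden_rec a n hn]
        push_cast
        ring
    · rw [e2, ih1, if_neg (by omega)]
      simp

lemma interval_neg (O dA dB dT : ℝ) (h1 : 0 < dB) (h2 : dB < dA) (h3 : 0 < dT) :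
    (hIco (O - dA) (O - dB) ∩ hIco O (O - dT)).Nonempty ↔ dB < dT := by
  rw [hIco, hIco, if_pos (by linarith), if_neg (by simp; linarith)]
  constructor
  · rintro ⟨x, ⟨hx1, hx2⟩, hx3, hx4⟩
    linarith
  · intro h
    refine ⟨max (O - dA) (O - (dB + dT)/2), ⟨le_max_left _ _, ?_⟩, ?_, ?_⟩
    · exact max_lt (by linarith) (by linarith)
    · exact lt_of_lt_of_le (by linarith) (le_max_right _ _)
    · exact max_le (by linarith) (by linarith)

lemma interval_pos (O dA dB dT : ℝ) (h1 : 0 < dB) (h2 : dB < dA) (h3 : 0 < dT) :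
    (hIco (O + dA) (O + dB) ∩ hIco O (O + dT)).Nonempty ↔ dB < dT := by
  rw [hIco, hIco, if_neg (by simp; linarith), if_pos (by linarith)]
  constructor
  · rintro ⟨x, ⟨hx1, hx2⟩, hx3, hx4⟩
    linarith
  · intro h
    refine ⟨min (O + dA) (O + (dB + dT)/2), ⟨?_, min_le_left _ _⟩, ?_, ?_⟩
    · exact lt_min (by linarith) (by linarith)
    · exact le_min (by linarith) (by linarith)
    · exact lt_of_le_of_lt (min_le_right _ _) (by linarith)


set_option maxHeartbeats 2000000 in
/-- `Bₙ ∩ C_{n−1} ≠ ∅ ↔ 1/(qₙq_{n−1}) < 1/(t_{n−1}(t_{n−1}+t_{n−2}))`. -/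
theorem stmt13 (n : ℕ) (hn : 2 ≤ n) (b c : ℕ → ℕ)
    (hb : ∀ k : ℕ, 1 ≤ k → k ≤ n → 2 ≤ b k) (hc : ∀ k : ℕ, 1 ≤ k → k ≤ n → 1 ≤ c k) :
    (Bset b c n ∩ Cset b c (n - 1)).Nonempty ↔
      (1 : ℝ) / ((qden b n : ℝ) * (qden b (n - 1) : ℝ)) <
        (1 : ℝ) / ((qden c (n - 1) : ℝ) *
          ((qden c (n - 1) : ℝ) + (qden c (n - 2) : ℝ))) := by
  obtain ⟨m, rfl⟩ : ∃ m, n = m + 2 := ⟨n - 2, by omega⟩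
  have hlb : ∀ x ∈ listOf b (m + 1), 1 ≤ x := by
    intro x hx
    simp only [listOf, List.mem_map, List.mem_range] at hx
    obtain ⟨i, hi, rfl⟩ := hx
    have := hb (i + 1) (by omega) (by omega); omega
  have hlc : ∀ x ∈ listOf c (m + 1), 1 ≤ x := by
    intro x hx
    simp only [listOf, List.mem_map, List.mem_range] at hx
    obtain ⟨i, hi, rfl⟩ := hx
    exact hc (i + 1) (by omega) (by omega)
  have hlcm : ∀ x ∈ listOf c m, 1 ≤ x := by
    intro x hx
    simp only [listOf, List.mem_map, List.mem_range] at hx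
    obtain ⟨i, hi, rfl⟩ := hx
    exact hc (i + 1) (by omega) (by omega)
  have hbn : 2 ≤ b (m + 2) := hb (m + 2) (by omega) le_rfl
  have memb2 : ∀ x ∈ listOf b (m + 1) ++ [b (m + 2)], 1 ≤ x := by
    intro x hx
    rcases List.mem_append.1 hx with h | h
    · exact hlb x h
    · rw [List.mem_singleton] at h; omega
  have memb1 : ∀ x ∈ listOf b (m + 1) ++ [b (m + 2) - 1], 1 ≤ x := by
    intro x hx
    rcases List.mem_append.1 hx with h | h
    · exact hlb x h
    · rw [List.mem_singleton] at h; omega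
  have memc2 : ∀ x ∈ listOf c m ++ [c (m + 1) + 1], 1 ≤ x := by
    intro x hx
    rcases List.mem_append.1 hx with h | h
    · exact hlcm x h
    · rw [List.mem_singleton] at h; omega
  -- cf formulas
  obtain ⟨eb1, eb2, eb3, eb4⟩ := Mm_append_entries (listOf b (m + 1)) (b (m + 2))
  obtain ⟨fb1, fb2, fb3, fb4⟩ := Mm_append_entries (listOf b (m + 1)) (b (m + 2) - 1)
  obtain ⟨ec1, ec2, ec3, ec4⟩ := Mm_append_entries (listOf c m) (c (m + 1))
  obtain ⟨fc1, fc2, fc3, fc4⟩ := Mm_append_entries (listOf c m) (c (m + 1) + 1)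
  have castb : ((b (m + 2) - 1 : ℕ) : ℝ) = (b (m + 2) : ℝ) - 1 := by
    have : 1 ≤ b (m + 2) := by omega
    push_cast [this]; ring
  have cfb2 : cf (listOf b (m + 2)) =
      (Mm (listOf b (m + 1)) 1 0 * (b (m + 2) : ℝ) + Mm (listOf b (m + 1)) 1 1) /
      (Mm (listOf b (m + 1)) 0 0 * (b (m + 2) : ℝ) + Mm (listOf b (m + 1)) 0 1) := by
    rw [listOf_succ, cf_eq _ memb2, eb1, eb3]
  have cfb1 : cf (listOf b (m + 1) ++ [b (m + 2) - 1]) =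
      (Mm (listOf b (m + 1)) 1 0 * ((b (m + 2) : ℝ) - 1) + Mm (listOf b (m + 1)) 1 1) /
      (Mm (listOf b (m + 1)) 0 0 * ((b (m + 2) : ℝ) - 1) + Mm (listOf b (m + 1)) 0 1) := by
    rw [cf_eq _ memb1, fb1, fb3, castb]
  have cfb0 : cf (listOf b (m + 1)) =
      Mm (listOf b (m + 1)) 1 0 / Mm (listOf b (m + 1)) 0 0 := cf_eq _ hlb
  have cfc1 : cf (listOf c (m + 1)) =
      (Mm (listOf c m) 1 0 * (c (m + 1) : ℝ) + Mm (listOf c m) 1 1) /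
      (Mm (listOf c m) 0 0 * (c (m + 1) : ℝ) + Mm (listOf c m) 0 1) := by
    rw [listOf_succ, cf_eq _ (by rw [← listOf_succ]; exact hlc), ec1, ec3]
  have cfc2 : cf (listOf c m ++ [c (m + 1) + 1]) =
      (Mm (listOf c m) 1 0 * ((c (m + 1) : ℝ) + 1) + Mm (listOf c m) 1 1) /
      (Mm (listOf c m) 0 0 * ((c (m + 1) : ℝ) + 1) + Mm (listOf c m) 0 1) := by
    rw [cf_eq _ memc2, fc1, fc3]
    push_cast
    ring_nf
  -- qden formulas
  have q2 : (qden b (m + 2) : ℝ) =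
      Mm (listOf b (m + 1)) 0 0 * (b (m + 2) : ℝ) + Mm (listOf b (m + 1)) 0 1 := by
    rw [← (Mm_q b (m + 2)).1, listOf_succ, eb1]
  have q1 : (qden b (m + 1) : ℝ) = Mm (listOf b (m + 1)) 0 0 := ((Mm_q b (m + 1)).1).symm
  have t1 : (qden c (m + 1) : ℝ) =
      Mm (listOf c m) 0 0 * (c (m + 1) : ℝ) + Mm (listOf c m) 0 1 := by
    rw [← (Mm_q c (m + 1)).1, listOf_succ, ec1]
  have t0 : (qden c m : ℝ) = Mm (listOf c m) 0 0 := ((Mm_q c m).1).symm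
  -- determinants
  have detb : Mm (listOf b (m + 1)) 0 0 * Mm (listOf b (m + 1)) 1 1 -
      Mm (listOf b (m + 1)) 0 1 * Mm (listOf b (m + 1)) 1 0 = (-1 : ℝ) ^ (m + 1) := by
    rw [Mm_det]
    congr 1
    simp [listOf]
  have detc : Mm (listOf c m) 0 0 * Mm (listOf c m) 1 1 -
      Mm (listOf c m) 0 1 * Mm (listOf c m) 1 0 = (-1 : ℝ) ^ m := by
    rw [Mm_det]
    congr 1
    simp [listOf]
  -- positivity
  obtain ⟨hQn, hQ'n, hPn, hP'n⟩ := Mm_nonneg (listOf b (m + 1))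
  obtain ⟨hun, hvn, hwn, hzn⟩ := Mm_nonneg (listOf c m)
  have hQ1 : 1 ≤ Mm (listOf b (m + 1)) 0 0 := Mm_one_le _ hlb
  have hu1 : 1 ≤ Mm (listOf c m) 0 0 := Mm_one_le _ hlcm
  have hbb : (2 : ℝ) ≤ (b (m + 2) : ℝ) := by exact_mod_cast hbn
  have hcc : (1 : ℝ) ≤ (c (m + 1) : ℝ) := by
    exact_mod_cast hc (m + 1) (by omega) (by omega)
  -- rewrite the goal
  simp only [Bset, Cset, show m + 2 - 1 = m + 1 from rfl, show m + 2 - 2 = m from rfl,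
    show m + 1 - 1 = m from rfl]
  rw [cfb1, cfb2, cfc1, cfc2, cfb0, q2, q1, t1, t0]
  -- abstract
  set Q := Mm (listOf b (m + 1)) 0 0 with hQdef
  set Q' := Mm (listOf b (m + 1)) 0 1 with hQ'def
  set P := Mm (listOf b (m + 1)) 1 0 with hPdef
  set P' := Mm (listOf b (m + 1)) 1 1 with hP'def
  set u := Mm (listOf c m) 0 0 with hudef
  set v := Mm (listOf c m) 0 1 with hvdef
  set w := Mm (listOf c m) 1 0 with hwdef
  set z := Mm (listOf c m) 1 1 with hzdef
  set bb := (b (m + 2) : ℝ) with hbbdef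
  set cc := (c (m + 1) : ℝ) with hccdef
  clear_value Q Q' P P' u v w z bb cc
  clear cfb1 cfb2 cfb0 cfc1 cfc2 q1 q2 t1 t0 eb1 eb2 eb3 eb4 fb1 fb2 fb3 fb4
  clear ec1 ec2 ec3 ec4 fc1 fc2 fc3 fc4 hlb hlc hlcm hb hc castb hbn hn memb1 memb2 memc2
  clear hQdef hQ'def hPdef hP'def hudef hvdef hwdef hzdef hbbdef hccdef
  have hA0 : 0 < Q * (bb - 1) + Q' := by nlinarith
  have hB0 : 0 < Q * bb + Q' := by nlinarith
  have hT0 : 0 < u * cc + v := by nlinarith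
  have hT20 : 0 < u * (cc + 1) + v := by nlinarith
  have hQ0 : 0 < Q := by linarith
  have hdB : 0 < 1 / (Q * (Q * bb + Q')) := by positivity
  have hdT : 0 < 1 / ((u * cc + v) * (u * cc + v + u)) := by positivity
  have hdAB : 1 / (Q * (Q * bb + Q')) < 1 / (Q * (Q * (bb - 1) + Q')) := by
    apply one_div_lt_one_div_of_lt
    · positivity
    · nlinarith
  have hcomm : (Q * bb + Q') * Q = Q * (Q * bb + Q') := mul_comm _ _
  rcases Nat.even_or_odd m with he | ho
  · -- m even : epsilon = -1
    have detb' : Q * P' - Q' * P = -1 := by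
      rw [detb, Odd.neg_one_pow (Even.add_one he)]
    have detc' : u * z - v * w = 1 := by rw [detc, Even.neg_one_pow he]
    set O := (w * cc + z) / (u * cc + v) + P / Q with hOdef
    have dE1 : (P * (bb - 1) + P') / (Q * (bb - 1) + Q') - P / Q =
        (-1) / (Q * (Q * (bb - 1) + Q')) := by
      rw [div_sub_div _ _ (ne_of_gt hA0) (ne_of_gt hQ0),
        div_eq_div_iff (by positivity) (by positivity)]
      linear_combination (Q * (Q * (bb - 1) + Q')) * detb'
    have dE2 : (P * bb + P') / (Q * bb + Q') - P / Q =
        (-1) / (Q * (Q * bb + Q')) := by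
      rw [div_sub_div _ _ (ne_of_gt hB0) (ne_of_gt hQ0),
        div_eq_div_iff (by positivity) (by positivity)]
      linear_combination (Q * (Q * bb + Q')) * detb'
    have dF2 : (w * (cc + 1) + z) / (u * (cc + 1) + v) - (w * cc + z) / (u * cc + v) =
        (-1) / ((u * cc + v) * (u * cc + v + u)) := by
      rw [div_sub_div _ _ (ne_of_gt hT20) (ne_of_gt hT0),
        div_eq_div_iff (by positivity) (by positivity)]
      linear_combination (-((u * cc + v) * (u * cc + v + u))) * detc'
    have hE1 : (P * (bb - 1) + P') / (Q * (bb - 1) + Q') + (w * cc + z) / (u * cc + v) =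
        O - 1 / (Q * (Q * (bb - 1) + Q')) := by
      rw [hOdef]
      linear_combination dE1
    have hE2 : (P * bb + P') / (Q * bb + Q') + (w * cc + z) / (u * cc + v) =
        O - 1 / (Q * (Q * bb + Q')) := by
      rw [hOdef]
      linear_combination dE2
    have hF2 : (w * (cc + 1) + z) / (u * (cc + 1) + v) + P / Q =
        O - 1 / ((u * cc + v) * (u * cc + v + u)) := by
      rw [hOdef]
      linear_combination dF2
    rw [hE1, hE2, hF2, hcomm]
    exact interval_neg O _ _ _ hdB hdAB hdT
  · -- m odd : epsilon = +1
    have detb' : Q * P' - Q' * P = 1 := by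
      rw [detb, Even.neg_one_pow (Odd.add_one ho)]
    have detc' : u * z - v * w = -1 := by rw [detc, Odd.neg_one_pow ho]
    set O := (w * cc + z) / (u * cc + v) + P / Q with hOdef
    have dE1 : (P * (bb - 1) + P') / (Q * (bb - 1) + Q') - P / Q =
        1 / (Q * (Q * (bb - 1) + Q')) := by
      rw [div_sub_div _ _ (ne_of_gt hA0) (ne_of_gt hQ0),
        div_eq_div_iff (by positivity) (by positivity)]
      linear_combination (Q * (Q * (bb - 1) + Q')) * detb'
    have dE2 : (P * bb + P') / (Q * bb + Q') - P / Q =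
        1 / (Q * (Q * bb + Q')) := by
      rw [div_sub_div _ _ (ne_of_gt hB0) (ne_of_gt hQ0),
        div_eq_div_iff (by positivity) (by positivity)]
      linear_combination (Q * (Q * bb + Q')) * detb'
    have dF2 : (w * (cc + 1) + z) / (u * (cc + 1) + v) - (w * cc + z) / (u * cc + v) =
        1 / ((u * cc + v) * (u * cc + v + u)) := by
      rw [div_sub_div _ _ (ne_of_gt hT20) (ne_of_gt hT0),
        div_eq_div_iff (by positivity) (by positivity)]
      linear_combination (-((u * cc + v) * (u * cc + v + u))) * detc'
    have hE1 : (P * (bb - 1) + P') / (Q * (bb - 1) + Q') + (w * cc + z) / (u * cc + v) =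
        O + 1 / (Q * (Q * (bb - 1) + Q')) := by
      rw [hOdef]
      linear_combination dE1
    have hE2 : (P * bb + P') / (Q * bb + Q') + (w * cc + z) / (u * cc + v) =
        O + 1 / (Q * (Q * bb + Q')) := by
      rw [hOdef]
      linear_combination dE2
    have hF2 : (w * (cc + 1) + z) / (u * (cc + 1) + v) + P / Q =
        O + 1 / ((u * cc + v) * (u * cc + v + u)) := by
      rw [hOdef]
      linear_combination dF2
    rw [hE1, hE2, hF2, hcomm]
    exact interval_pos O _ _ _ hdB hdAB hdT


end ShulgaPaper
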